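/- Let 1 ≤ m ≤ |S|. Let ω_m be an m-element subset of S consisting of m largest-weight elements (i.e. min_{s∈ω_m} w(s) ≥ max_{s∈S∖ω_m} w(s)) and let ω_{m−1} be an (m−1)-element subset of S consisting of m−1 largest-weight elements. If w(ω_{m−1}) < T ≤ w(ω_m), then ω_m is a critical syndrome, and moreover min_{ω∈∂} |ω| = m (every critical syndrome has cardinality at least m). -/

import Mathlib

open scoped Classical

noncomputable section

lemma top_sum_max {S : Type*} [Fintype S] (w : S → ℝ) (hw : ∀ s, 0 < w s)
    (A B : Finset S) (hB : ∀ s ∈ B, ∀ s' ∉ B, w s' ≤ w s)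
    (hcard : A.card ≤ B.card) : ∑ s ∈ A, w s ≤ ∑ s ∈ B, w s := by
  have hdiff : (A \ B).card ≤ (B \ A).card := by
    have h1 := Finset.card_sdiff_add_card_inter A B
    have h2 := Finset.card_sdiff_add_card_inter B A
    rw [Finset.inter_comm] at h2
    omega
  obtain ⟨C, hCsub, hCcard⟩ := Finset.exists_subset_card_eq hdiff
  have e : (A \ B : Finset S) ≃ (C : Finset S) := Fintype.equivOfCardEq (by
    rw [Fintype.card_coe, Fintype.card_coe, hCcard])
  have key : ∑ s ∈ A \ B, w s ≤ ∑ s ∈ C, w s := by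
    rw [← Finset.sum_coe_sort (A \ B) w, ← Finset.sum_coe_sort C w,
      ← Equiv.sum_comp e (fun x : {x // x ∈ C} => w ↑x)]
    apply Finset.sum_le_sum
    intro x _
    have hx : (x : S) ∉ B := (Finset.mem_sdiff.mp x.2).2
    have he : ((e x : S)) ∈ B := (Finset.mem_sdiff.mp (hCsub (e x).2)).1
    exact hB _ he _ hx
  calc ∑ s ∈ A, w s = ∑ s ∈ A ∩ B, w s + ∑ s ∈ A \ B, w s := by
        rw [Finset.sum_inter_add_sum_sdiff]
    _ ≤ ∑ s ∈ A ∩ B, w s + ∑ s ∈ C, w s := by linarith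
    _ ≤ ∑ s ∈ A ∩ B, w s + ∑ s ∈ B \ A, w s :=
        add_le_add_right (Finset.sum_le_sum_of_subset_of_nonneg hCsub
          (fun i _ _ => (hw i).le)) _
    _ = ∑ s ∈ B, w s := by rw [Finset.inter_comm, Finset.sum_inter_add_sum_sdiff]


/-- `ω` is a syndrome for weights `w` and threshold `T`: its weight sum is at least `T`. -/
def IsSyndrome {S : Type*} (w : S → ℝ) (T : ℝ) (ω : Finset S) : Prop :=
  T ≤ ∑ s ∈ ω, w s

/-- `ω` is a critical syndrome: it is a syndrome, but every proper subset of it is not. -/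
def IsCritical {S : Type*} (w : S → ℝ) (T : ℝ) (ω : Finset S) : Prop :=
  (T ≤ ∑ s ∈ ω, w s) ∧ ∀ ω' ⊂ ω, ∑ s ∈ ω', w s < T

/-- first half of Fact 1. If a set `ωm` of `m` largest-weight elements is a
syndrome while a set `ωm1` of `m − 1` largest-weight elements is not, then `ωm` is a critical
syndrome and every critical syndrome has cardinality at least `m`. -/
theorem top_weight_critical_syndrome
    {S : Type*} [Fintype S] [Nonempty S] (w : S → ℝ) (hw : ∀ s, 0 < w s)
    (T : ℝ) (hT : 0 < T) (hST : T ≤ ∑ s, w s)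
    (m : ℕ) (hm1 : 1 ≤ m) (hm : m ≤ Fintype.card S)
    (ωm : Finset S) (hωm_card : ωm.card = m)
    (hωm_top : ∀ s ∈ ωm, ∀ s' ∉ ωm, w s' ≤ w s)
    (ωm1 : Finset S) (hωm1_card : ωm1.card = m - 1)
    (hωm1_top : ∀ s ∈ ωm1, ∀ s' ∉ ωm1, w s' ≤ w s)
    (hlt : ∑ s ∈ ωm1, w s < T) (hge : T ≤ ∑ s ∈ ωm, w s) :
    IsCritical w T ωm ∧ ∀ ω : Finset S, IsCritical w T ω → m ≤ ω.card := by
  have sub : ∀ ω : Finset S, ω.card ≤ m - 1 → ∑ s ∈ ω, w s < T := by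
    intro ω hω
    exact lt_of_le_of_lt (top_sum_max w hw ω ωm1 hωm1_top (by omega)) hlt
  constructor
  · refine ⟨hge, fun ω' hω' => ?_⟩
    have : ω'.card < m := hωm_card ▸ Finset.card_lt_card hω'
    exact sub ω' (by omega)
  · intro ω hω
    by_contra h
    exact absurd hω.1 (not_le.mpr (sub ω (by omega)))
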